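/- Let q̃_{j1} ≤ q̃_{j2} ≤ ... ≤ q̃_{jn} be the sorted values of q̃ and let K be any set of m < n driver nodes. Then λ_min(W) ≤ q̃_{j_{m+1}}. -/

import Mathlib

open Matrix Finset

/-- Single-driver controllability Gramian `W^(i) = Σ_{t<T} A^t eᵢ eᵢᵀ (Aᵀ)^t`. -/
noncomputable def singleGram {n : ℕ} (A : Matrix (Fin n) (Fin n) ℝ) (T : ℕ) (i : Fin n) :
    Matrix (Fin n) (Fin n) ℝ :=
  ∑ t ∈ Finset.range T, A ^ t * Matrix.single i i (1 : ℝ) * (Aᵀ) ^ t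

/-- `q̃_j = Σ_{i≠j} ε_{i→j}` with `ε_{i→j} = W^(i)_{jj}`. -/
noncomputable def qTilde {n : ℕ} (A : Matrix (Fin n) (Fin n) ℝ) (T : ℕ) (j : Fin n) : ℝ :=
  ∑ i ∈ Finset.univ.filter (· ≠ j), singleGram A T i j j

lemma singleGram_diag {n : ℕ} (A : Matrix (Fin n) (Fin n) ℝ) (T : ℕ) (i j : Fin n) :
    singleGram A T i j j = ∑ t ∈ Finset.range T, (A ^ t) j i ^ 2 := by
  unfold singleGram
  rw [Matrix.sum_apply]
  refine Finset.sum_congr rfl fun t _ => ?_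
  rw [← Matrix.transpose_pow]
  simp [Matrix.mul_apply, Matrix.single, ite_and, Finset.sum_ite_eq, sq,
    Matrix.transpose_apply]
  exact Or.inl (by rw [← Matrix.transpose_pow, Matrix.transpose_apply])

lemma singleGram_diag_nonneg {n : ℕ} (A : Matrix (Fin n) (Fin n) ℝ) (T : ℕ) (i j : Fin n) :
    0 ≤ singleGram A T i j j := by
  rw [singleGram_diag]
  exact Finset.sum_nonneg fun t _ => sq_nonneg _

lemma min_eig_le_diag {n : ℕ} [NeZero n] {M : Matrix (Fin n) (Fin n) ℝ}
    (hM : M.IsHermitian) (j : Fin n) :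
    ⨅ k : Fin n, hM.eigenvalues k ≤ M j j := by
  set c := ⨅ k : Fin n, hM.eigenvalues k with hc
  have hle : ∀ k, c ≤ hM.eigenvalues k := fun k =>
    ciInf_le (Set.Finite.bddBelow (Set.finite_range _)) k
  have hps : (M - c • (1 : Matrix (Fin n) (Fin n) ℝ)).PosSemidef := by
    have hU : (hM.eigenvectorUnitary : Matrix (Fin n) (Fin n) ℝ) *
        star (hM.eigenvectorUnitary : Matrix (Fin n) (Fin n) ℝ) = 1 :=
      Matrix.mem_unitaryGroup_iff.mp hM.eigenvectorUnitary.2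
    have hspec := hM.spectral_theorem
    rw [Unitary.conjStarAlgAut_apply, Matrix.star_eq_conjTranspose] at hspec
    have key : M - c • (1 : Matrix (Fin n) (Fin n) ℝ) =
        (hM.eigenvectorUnitary : Matrix (Fin n) (Fin n) ℝ) *
          Matrix.diagonal (fun k => hM.eigenvalues k - c) *
          (hM.eigenvectorUnitary : Matrix (Fin n) (Fin n) ℝ)ᴴ := by
      have : Matrix.diagonal (fun k => hM.eigenvalues k - c) =
          Matrix.diagonal (RCLike.ofReal ∘ hM.eigenvalues) -
            c • (1 : Matrix (Fin n) (Fin n) ℝ) := by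
        ext a b
        by_cases h : a = b <;>
          simp [Matrix.diagonal, h, Matrix.one_apply, Matrix.smul_apply]
      rw [this, Matrix.mul_sub, Matrix.sub_mul, ← hspec]
      congr 1
      rw [Matrix.mul_smul, Matrix.smul_mul, Matrix.mul_one]
      congr 1
      rw [Matrix.star_eq_conjTranspose] at hU
      exact hU.symm
    rw [key]
    exact (Matrix.PosSemidef.diagonal fun k => sub_nonneg.mpr (hle k)).mul_mul_conjTranspose_same _
  have h0 : 0 ≤ (M - c • (1 : Matrix (Fin n) (Fin n) ℝ)) j j := by
    have := hps.dotProduct_mulVec_nonneg (Pi.single j 1)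
    simpa [dotProduct, Matrix.mulVec, Pi.single_apply, Finset.sum_ite_eq,
      Finset.sum_ite_eq'] using this
  have : (M - c • (1 : Matrix (Fin n) (Fin n) ℝ)) j j = M j j - c := by
    simp [Matrix.sub_apply, Matrix.smul_apply, Matrix.one_apply]
  linarith [h0, this ▸ h0]

/-- If `(j_1,…,j_n)` (here the permutation `σ`) sorts `q̃` increasingly and `|K| = m < n`,
then `λ_min(W) ≤ q̃_{j_{m+1}}`. -/
theorem lambda_min_le_sorted_qTilde {n : ℕ} (A : Matrix (Fin n) (Fin n) ℝ) (T : ℕ)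
    (K : Finset (Fin n)) (m : ℕ) (hKcard : K.card = m) (hm : m < n)
    (σ : Equiv.Perm (Fin n)) (hsorted : Monotone fun k => qTilde A T (σ k))
    (hW : (∑ i ∈ K, singleGram A T i).IsHermitian) :
    ⨅ k : Fin n, hW.eigenvalues k ≤ qTilde A T (σ ⟨m, hm⟩) := by
  haveI : NeZero n := ⟨by omega⟩
  -- find k ≤ ⟨m, hm⟩ with σ k ∉ K
  obtain ⟨k, hk, hkK⟩ : ∃ k ∈ Finset.Iic (⟨m, hm⟩ : Fin n), σ k ∉ K := by
    by_contra h
    push_neg at h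
    have hsub : (Finset.Iic (⟨m, hm⟩ : Fin n)).image σ ⊆ K := by
      intro x hx
      obtain ⟨k, hk, rfl⟩ := Finset.mem_image.mp hx
      exact h k hk
    have hcard : ((Finset.Iic (⟨m, hm⟩ : Fin n)).image σ).card = m + 1 := by
      rw [Finset.card_image_of_injective _ σ.injective, Fin.card_Iic]
    have := Finset.card_le_card hsub
    omega
  -- min eigenvalue ≤ diagonal entry at σ k
  have h1 : ⨅ i : Fin n, hW.eigenvalues i ≤ (∑ i ∈ K, singleGram A T i) (σ k) (σ k) :=
    min_eig_le_diag hW (σ k)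
  -- diagonal entry ≤ qTilde (σ k)
  have h2 : (∑ i ∈ K, singleGram A T i) (σ k) (σ k) ≤ qTilde A T (σ k) := by
    rw [Matrix.sum_apply]
    unfold qTilde
    refine Finset.sum_le_sum_of_subset_of_nonneg ?_ fun i _ _ => singleGram_diag_nonneg A T i _
    intro i hi
    simp only [Finset.mem_filter, Finset.mem_univ, true_and]
    rintro rfl
    exact hkK hi
  -- qTilde (σ k) ≤ qTilde (σ ⟨m, hm⟩)
  have h3 : qTilde A T (σ k) ≤ qTilde A T (σ ⟨m, hm⟩) := hsorted (Finset.mem_Iic.mp hk)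
  linarith
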